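/- Let n ≥ 1, R > 0, t ≥ 0, let θ ∈ ℝⁿ be a unit vector, and let g ∈ L²(ℝⁿ) vanish outside the closed ball B̄(0,R). Then the function F(x) := 1_{{x·θ ≤ t}}(x) · ∫_{-∞}^0 g(x+sθ) ds belongs to L²(ℝⁿ) and satisfies ‖F‖_{L²(ℝⁿ)} ≤ (2R+t)·‖g‖_{L²(ℝⁿ)}. -/

import Mathlib

open MeasureTheory Set
open scoped RealInnerProductSpace ENNReal

-- pointwise vanishing lemma
lemma vanish_aux {n : ℕ} (R t : ℝ) (hR : 0 < R)
    (θ : EuclideanSpace ℝ (Fin n)) (hθ : ‖θ‖ = 1)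
    (g : EuclideanSpace ℝ (Fin n) → ℝ)
    (hsupp : ∀ x, x ∉ Metric.closedBall (0 : EuclideanSpace ℝ (Fin n)) R → g x = 0)
    (x : EuclideanSpace ℝ (Fin n)) (hx : ⟪x, θ⟫ ≤ t) (s : ℝ) (hs : s < -(R + t)) :
    g (x + s • θ) = 0 := by
  apply hsupp
  simp only [Metric.mem_closedBall, dist_zero_right, not_le]
  have h1 : ⟪x + s • θ, θ⟫ = ⟪x, θ⟫ + s := by
    rw [inner_add_left, real_inner_smul_left, real_inner_self_eq_norm_sq, hθ]
    ring
  have h2 : ⟪x + s • θ, θ⟫ < -R := by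
    rw [h1]; linarith
  have h3 : |⟪x + s • θ, θ⟫| ≤ ‖x + s • θ‖ := by
    calc |⟪x + s • θ, θ⟫| ≤ ‖x + s • θ‖ * ‖θ‖ := abs_real_inner_le_norm _ _
    _ = ‖x + s • θ‖ := by rw [hθ, mul_one]
  have : R < |⟪x + s • θ, θ⟫| := by
    rw [abs_of_neg (by linarith)]; linarith
  linarith

lemma ptwise_aux {n : ℕ} (R t : ℝ) (hR : 0 < R) (ht : 0 ≤ t)
    (θ : EuclideanSpace ℝ (Fin n)) (hθ : ‖θ‖ = 1)
    (g : EuclideanSpace ℝ (Fin n) → ℝ) (hgm : Measurable g)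
    (hsupp : ∀ x, x ∉ Metric.closedBall (0 : EuclideanSpace ℝ (Fin n)) R → g x = 0)
    (x : EuclideanSpace ℝ (Fin n)) :
    (‖Set.indicator {x : EuclideanSpace ℝ (Fin n) | ⟪x, θ⟫ ≤ t}
        (fun x => ∫ s in Iic (0 : ℝ), g (x + s • θ)) x‖₊ : ℝ≥0∞) ^ (2 : ℝ)
      ≤ ENNReal.ofReal (R + t) *
        ∫⁻ s in Icc (-(R + t)) 0, (‖g (x + s • θ)‖₊ : ℝ≥0∞) ^ (2 : ℝ) := by
  by_cases hx : ⟪x, θ⟫ ≤ t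
  case neg =>
    simp only [Set.indicator_apply, Set.mem_setOf_eq, if_neg hx]
    simp
  simp only [Set.indicator_apply, Set.mem_setOf_eq, if_pos hx]
  have hab : -(R + t) ≤ (0 : ℝ) := by linarith
  -- step 1 : norm of integral ≤ lintegral of norms
  have h1 : (‖∫ s in Iic (0 : ℝ), g (x + s • θ)‖₊ : ℝ≥0∞)
      ≤ ∫⁻ s in Iic (0 : ℝ), (‖g (x + s • θ)‖₊ : ℝ≥0∞) :=
    enorm_integral_le_lintegral_enorm _
  -- step 2 : restrict to Icc
  have h2 : (∫⁻ s in Iic (0 : ℝ), (‖g (x + s • θ)‖₊ : ℝ≥0∞))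
      = ∫⁻ s in Icc (-(R + t)) 0, (‖g (x + s • θ)‖₊ : ℝ≥0∞) := by
    rw [← Iio_union_Icc_eq_Iic hab, lintegral_union measurableSet_Icc
      ((Iio_disjoint_Ici le_rfl).mono_right Icc_subset_Ici_self)]
    have : (∫⁻ s in Iio (-(R + t)), (‖g (x + s • θ)‖₊ : ℝ≥0∞))
        = ∫⁻ _ in Iio (-(R + t)), (0 : ℝ≥0∞) := by
      refine setLIntegral_congr_fun measurableSet_Iio
        (fun s hs => ?_)
      simp [vanish_aux R t hR θ hθ g hsupp x hx s hs]
    rw [this]; simp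
  -- step 3 : Cauchy-Schwarz
  have h3 : (∫⁻ s in Icc (-(R + t)) 0, (‖g (x + s • θ)‖₊ : ℝ≥0∞))
      ≤ (∫⁻ s in Icc (-(R + t)) 0, (‖g (x + s • θ)‖₊ : ℝ≥0∞) ^ (2 : ℝ)) ^ (1/2 : ℝ)
        * (ENNReal.ofReal (R + t)) ^ (1/2 : ℝ) := by
    have hconj : Real.HolderConjugate 2 2 := Real.HolderConjugate.two_two
    have H := ENNReal.lintegral_mul_le_Lp_mul_Lq
      (volume.restrict (Icc (-(R + t)) (0:ℝ))) hconj
      (f := fun s => (‖g (x + s • θ)‖₊ : ℝ≥0∞)) (g := fun _ => 1)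
      (by fun_prop) (by fun_prop)
    simp only [Pi.mul_apply, mul_one, ENNReal.one_rpow] at H
    calc (∫⁻ s in Icc (-(R + t)) 0, (‖g (x + s • θ)‖₊ : ℝ≥0∞)) ≤ _ := H
    _ = (∫⁻ s in Icc (-(R + t)) 0, (‖g (x + s • θ)‖₊ : ℝ≥0∞) ^ (2 : ℝ)) ^ (1/2 : ℝ)
        * (ENNReal.ofReal (R + t)) ^ (1/2 : ℝ) := by
      rw [lintegral_one, Measure.restrict_apply_univ, Real.volume_Icc]
      norm_num
  calc (‖∫ s in Iic (0 : ℝ), g (x + s • θ)‖₊ : ℝ≥0∞) ^ (2 : ℝ)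
      ≤ ((∫⁻ s in Icc (-(R + t)) 0, (‖g (x + s • θ)‖₊ : ℝ≥0∞) ^ (2 : ℝ)) ^ (1/2 : ℝ)
        * (ENNReal.ofReal (R + t)) ^ (1/2 : ℝ)) ^ (2 : ℝ) :=
      ENNReal.rpow_le_rpow (h1.trans (h2 ▸ h3)) (by norm_num)
  _ = ENNReal.ofReal (R + t) *
        ∫⁻ s in Icc (-(R + t)) 0, (‖g (x + s • θ)‖₊ : ℝ≥0∞) ^ (2 : ℝ) := by
      rw [ENNReal.mul_rpow_of_nonneg _ _ (by norm_num : (0:ℝ) ≤ 2),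
        ← ENNReal.rpow_mul, ← ENNReal.rpow_mul]
      norm_num [mul_comm]

lemma lintegral_aux {n : ℕ} (R t : ℝ) (hR : 0 < R) (ht : 0 ≤ t)
    (θ : EuclideanSpace ℝ (Fin n)) (hθ : ‖θ‖ = 1)
    (g : EuclideanSpace ℝ (Fin n) → ℝ) (hgm : Measurable g)
    (hsupp : ∀ x, x ∉ Metric.closedBall (0 : EuclideanSpace ℝ (Fin n)) R → g x = 0) :
    (∫⁻ x, (‖Set.indicator {x : EuclideanSpace ℝ (Fin n) | ⟪x, θ⟫ ≤ t}
        (fun x => ∫ s in Iic (0 : ℝ), g (x + s • θ)) x‖₊ : ℝ≥0∞) ^ (2 : ℝ))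
      ≤ ENNReal.ofReal (R + t) * (ENNReal.ofReal (R + t) *
          ∫⁻ y, (‖g y‖₊ : ℝ≥0∞) ^ (2 : ℝ)) := by
  have hq : Measurable (fun p : EuclideanSpace ℝ (Fin n) × ℝ =>
      (‖g (p.1 + p.2 • θ)‖₊ : ℝ≥0∞) ^ (2 : ℝ)) := by
    have hm : Measurable (fun p : EuclideanSpace ℝ (Fin n) × ℝ => p.1 + p.2 • θ) := by
      fun_prop
    fun_prop
  calc (∫⁻ x, (‖Set.indicator {x : EuclideanSpace ℝ (Fin n) | ⟪x, θ⟫ ≤ t}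
        (fun x => ∫ s in Iic (0 : ℝ), g (x + s • θ)) x‖₊ : ℝ≥0∞) ^ (2 : ℝ))
      ≤ ∫⁻ x, ENNReal.ofReal (R + t) *
          ∫⁻ s in Icc (-(R + t)) 0, (‖g (x + s • θ)‖₊ : ℝ≥0∞) ^ (2 : ℝ) :=
    lintegral_mono (ptwise_aux R t hR ht θ hθ g hgm hsupp)
  _ = ENNReal.ofReal (R + t) *
        ∫⁻ x, ∫⁻ s in Icc (-(R + t)) 0, (‖g (x + s • θ)‖₊ : ℝ≥0∞) ^ (2 : ℝ) :=
    lintegral_const_mul' _ _ ENNReal.ofReal_ne_top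
  _ = ENNReal.ofReal (R + t) *
        ∫⁻ s in Icc (-(R + t)) 0, ∫⁻ x, (‖g (x + s • θ)‖₊ : ℝ≥0∞) ^ (2 : ℝ) := by
    rw [lintegral_lintegral_swap]
    exact (hq.aemeasurable)
  _ = ENNReal.ofReal (R + t) *
        ∫⁻ _ in Icc (-(R + t)) 0, ∫⁻ y, (‖g y‖₊ : ℝ≥0∞) ^ (2 : ℝ) := by
    congr 1
    refine lintegral_congr fun s => ?_
    exact lintegral_add_right_eq_self (fun y => (‖g y‖₊ : ℝ≥0∞) ^ (2 : ℝ)) (s • θ)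
  _ = ENNReal.ofReal (R + t) * (ENNReal.ofReal (R + t) *
        ∫⁻ y, (‖g y‖₊ : ℝ≥0∞) ^ (2 : ℝ)) := by
    rw [setLIntegral_const, Real.volume_Icc, mul_comm (∫⁻ y, _)]
    norm_num

lemma eLpNorm_aux {n : ℕ} (R t : ℝ) (hR : 0 < R) (ht : 0 ≤ t)
    (θ : EuclideanSpace ℝ (Fin n)) (hθ : ‖θ‖ = 1)
    (g : EuclideanSpace ℝ (Fin n) → ℝ) (hgm : Measurable g)
    (hsupp : ∀ x, x ∉ Metric.closedBall (0 : EuclideanSpace ℝ (Fin n)) R → g x = 0) :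
    eLpNorm (fun x : EuclideanSpace ℝ (Fin n) =>
        Set.indicator {x : EuclideanSpace ℝ (Fin n) | ⟪x, θ⟫ ≤ t}
          (fun x => ∫ s in Iic (0 : ℝ), g (x + s • θ)) x) 2 volume
      ≤ ENNReal.ofReal (R + t) * eLpNorm g 2 volume := by
  rw [← ENNReal.rpow_le_rpow_iff (z := 2) two_pos]
  have h2 : ∀ f : EuclideanSpace ℝ (Fin n) → ℝ,
      eLpNorm f 2 volume = (∫⁻ x, (‖f x‖₊ : ℝ≥0∞) ^ (2 : ℝ)) ^ (1/2 : ℝ) := fun f => by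
    rw [eLpNorm_eq_lintegral_rpow_enorm_toReal (by norm_num) (by norm_num)]
    norm_num
    rfl
  rw [h2, h2, ENNReal.mul_rpow_of_nonneg _ _ (by norm_num : (0:ℝ) ≤ 2),
    ← ENNReal.rpow_mul, ← ENNReal.rpow_mul,
    show (1/2 * 2 : ℝ) = 1 by norm_num, ENNReal.rpow_one, ENNReal.rpow_one]
  refine (lintegral_aux R t hR ht θ hθ g hgm hsupp).trans (le_of_eq ?_)
  rw [← mul_assoc]
  congr 1
  rw [show ((2:ℝ) : ℝ) = ((2:ℕ) : ℝ) by norm_num, ENNReal.rpow_natCast, sq]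


theorem stmt_0 {n : ℕ} (hn : 1 ≤ n) (R t : ℝ) (hR : 0 < R) (ht : 0 ≤ t)
    (θ : EuclideanSpace ℝ (Fin n)) (hθ : ‖θ‖ = 1)
    (g : EuclideanSpace ℝ (Fin n) → ℝ)
    (hg : MemLp g 2 volume)
    (hsupp : ∀ x, x ∉ Metric.closedBall (0 : EuclideanSpace ℝ (Fin n)) R → g x = 0) :
    MemLp (fun x : EuclideanSpace ℝ (Fin n) =>
        Set.indicator {x : EuclideanSpace ℝ (Fin n) | ⟪x, θ⟫ ≤ t}
          (fun x => ∫ s in Iic (0 : ℝ), g (x + s • θ)) x) 2 volume ∧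
    eLpNorm (fun x : EuclideanSpace ℝ (Fin n) =>
        Set.indicator {x : EuclideanSpace ℝ (Fin n) | ⟪x, θ⟫ ≤ t}
          (fun x => ∫ s in Iic (0 : ℝ), g (x + s • θ)) x) 2 volume
      ≤ ENNReal.ofReal (2 * R + t) * eLpNorm g 2 volume := by
  classical
  -- measurable substitute for g
  set g' : EuclideanSpace ℝ (Fin n) → ℝ :=
    Set.indicator (Metric.closedBall (0 : EuclideanSpace ℝ (Fin n)) R) (hg.aestronglyMeasurable.mk g) with hg'def
  have hg'm : Measurable g' :=
    (hg.aestronglyMeasurable.stronglyMeasurable_mk.measurable).indicator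
      measurableSet_closedBall
  have hgg' : g =ᵐ[volume] g' := by
    filter_upwards [hg.aestronglyMeasurable.ae_eq_mk] with x hx
    rw [hg'def]
    by_cases hxx : x ∈ Metric.closedBall (0 : EuclideanSpace ℝ (Fin n)) R
    · rw [Set.indicator_of_mem hxx]; exact hx
    · rw [Set.indicator_of_notMem hxx]; exact hsupp x hxx
  have hsupp' : ∀ x, x ∉ Metric.closedBall (0 : EuclideanSpace ℝ (Fin n)) R → g' x = 0 := fun x hx =>
    Set.indicator_of_notMem hx _
  -- the two functions agree a.e.
  have hA : volume {y : EuclideanSpace ℝ (Fin n) | ¬ g y = g' y} = 0 := ae_iff.mp hgg'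
  obtain ⟨N, hNsub, hNmeas, hN0⟩ := exists_measurable_superset_of_null hA
  have hprod : (volume.prod volume) {p : EuclideanSpace ℝ (Fin n) × ℝ | p.1 + p.2 • θ ∈ N} = 0 := by
    have hQ : Measurable (fun p : EuclideanSpace ℝ (Fin n) × ℝ => p.1 + p.2 • θ) := by fun_prop
    have hDeq : {p : EuclideanSpace ℝ (Fin n) × ℝ | p.1 + p.2 • θ ∈ N}
        = (fun p : EuclideanSpace ℝ (Fin n) × ℝ => p.1 + p.2 • θ) ⁻¹' N := rfl
    rw [hDeq, Measure.prod_apply_symm (μ := (volume : Measure (EuclideanSpace ℝ (Fin n)))) (ν := (volume : Measure ℝ)) (hQ hNmeas)]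
    have heach : ∀ s : ℝ, volume ((fun x : EuclideanSpace ℝ (Fin n) => (x, s)) ⁻¹'
        ((fun p : EuclideanSpace ℝ (Fin n) × ℝ => p.1 + p.2 • θ) ⁻¹' N)) = volume N := fun s => by
      have h1 : ((fun x : EuclideanSpace ℝ (Fin n) => (x, s)) ⁻¹'
          ((fun p : EuclideanSpace ℝ (Fin n) × ℝ => p.1 + p.2 • θ) ⁻¹' N))
          = (fun x : EuclideanSpace ℝ (Fin n) => x + s • θ) ⁻¹' N := rfl
      rw [h1, measure_preimage_add_right]
    simp [heach, hN0]
  have hae : ∀ᵐ x : EuclideanSpace ℝ (Fin n) ∂volume, ∀ᵐ s : ℝ ∂volume, x + s • θ ∉ N := by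
    have hae' : ∀ᵐ q : EuclideanSpace ℝ (Fin n) × ℝ
        ∂((volume : Measure (EuclideanSpace ℝ (Fin n))).prod (volume : Measure ℝ)),
        q.1 + q.2 • θ ∉ N := by
      rw [MeasureTheory.ae_iff]
      simpa using hprod
    exact Measure.ae_ae_of_ae_prod hae'
  have hFF' : (fun x : EuclideanSpace ℝ (Fin n) =>
        Set.indicator {x : EuclideanSpace ℝ (Fin n) | ⟪x, θ⟫ ≤ t} (fun x => ∫ s in Iic (0 : ℝ), g (x + s • θ)) x)
      =ᵐ[volume] (fun x : EuclideanSpace ℝ (Fin n) =>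
        Set.indicator {x : EuclideanSpace ℝ (Fin n) | ⟪x, θ⟫ ≤ t} (fun x => ∫ s in Iic (0 : ℝ), g' (x + s • θ)) x) := by
    filter_upwards [hae] with x hx
    have hint : (∫ s in Iic (0 : ℝ), g (x + s • θ)) = ∫ s in Iic (0 : ℝ), g' (x + s • θ) := by
      refine integral_congr_ae (ae_restrict_of_ae ?_)
      filter_upwards [hx] with s hs
      by_contra hne
      exact hs (hNsub (by simpa using hne))
    by_cases hxS : x ∈ {x : EuclideanSpace ℝ (Fin n) | ⟪x, θ⟫ ≤ t}
    · rw [Set.indicator_of_mem hxS, Set.indicator_of_mem hxS, hint]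
    · rw [Set.indicator_of_notMem hxS, Set.indicator_of_notMem hxS]
  -- strong measurability of the primed function
  have hS : MeasurableSet {x : EuclideanSpace ℝ (Fin n) | ⟪x, θ⟫ ≤ t} := by
    have : Continuous fun x : EuclideanSpace ℝ (Fin n) => ⟪x, θ⟫ := continuous_id.inner continuous_const
    exact measurableSet_le this.measurable measurable_const
  have hF'm : StronglyMeasurable (fun x : EuclideanSpace ℝ (Fin n) =>
      Set.indicator {x : EuclideanSpace ℝ (Fin n) | ⟪x, θ⟫ ≤ t} (fun x => ∫ s in Iic (0 : ℝ), g' (x + s • θ)) x) := by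
    refine StronglyMeasurable.indicator ?_ hS
    refine StronglyMeasurable.integral_prod_right ?_
    have hm : Measurable (fun p : EuclideanSpace ℝ (Fin n) × ℝ => g' (p.1 + p.2 • θ)) := by
      have : Measurable (fun p : EuclideanSpace ℝ (Fin n) × ℝ => p.1 + p.2 • θ) := by fun_prop
      exact hg'm.comp this
    exact hm.stronglyMeasurable
  -- the bound for g'
  have hbound := eLpNorm_aux R t hR ht θ hθ g' hg'm hsupp'
  have hgnorm : eLpNorm g' 2 volume = eLpNorm g 2 volume := eLpNorm_congr_ae hgg'.symm
  have hle : ENNReal.ofReal (R + t) ≤ ENNReal.ofReal (2 * R + t) :=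
    ENNReal.ofReal_le_ofReal (by linarith)
  have hbound2 : eLpNorm (fun x : EuclideanSpace ℝ (Fin n) =>
        Set.indicator {x : EuclideanSpace ℝ (Fin n) | ⟪x, θ⟫ ≤ t} (fun x => ∫ s in Iic (0 : ℝ), g' (x + s • θ)) x)
          2 volume ≤ ENNReal.ofReal (2 * R + t) * eLpNorm g 2 volume := by
    rw [← hgnorm]
    exact hbound.trans (mul_le_mul_left hle _)
  have hsnorm_eq : eLpNorm (fun x : EuclideanSpace ℝ (Fin n) =>
        Set.indicator {x : EuclideanSpace ℝ (Fin n) | ⟪x, θ⟫ ≤ t} (fun x => ∫ s in Iic (0 : ℝ), g (x + s • θ)) x)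
          2 volume
      = eLpNorm (fun x : EuclideanSpace ℝ (Fin n) =>
        Set.indicator {x : EuclideanSpace ℝ (Fin n) | ⟪x, θ⟫ ≤ t} (fun x => ∫ s in Iic (0 : ℝ), g' (x + s • θ)) x)
          2 volume := eLpNorm_congr_ae hFF'
  constructor
  · refine MemLp.ae_eq hFF'.symm ?_
    refine ⟨hF'm.aestronglyMeasurable, ?_⟩
    refine lt_of_le_of_lt hbound2 ?_
    exact ENNReal.mul_lt_top ENNReal.ofReal_lt_top hg.2
  · rw [hsnorm_eq]
    exact hbound2
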